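/- Let A ∈ ℝ^{N×N}, let π be a permutation of Fin N whose permutation matrix P satisfies P·A = A·P, let F and H be m×m real matrices, and let z : ℝ → (Fin N → ℝ^m) be such that for every i and every t, the function t ↦ z_i(t) has derivative F·z_i(t) + ∑_{j=1}^N A_{ij} H·z_j(t) at t. Define y : ℝ → (Fin N → ℝ^m) by y_i(t) = z_{π⁻¹(i)}(t). Then for every i and every t, the function t ↦ y_i(t) has derivative F·y_i(t) + ∑_{j=1}^N A_{ij} H·y_j(t) at t; that is, permuting a solution of the identical-dynamics network equations by a symmetry of the network yields another solution. -/
import Mathlib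


open Matrix

/-- Permuting a solution of the identical-dynamics network equations by a
symmetry of the network (a permutation whose matrix commutes with `A`) yields
another solution. -/
theorem stmt_12 (N m : ℕ) (A : Matrix (Fin N) (Fin N) ℝ) (π : Equiv.Perm (Fin N))
    (P : Matrix (Fin N) (Fin N) ℝ)
    (hP : ∀ i j, P i j = if i = π j then 1 else 0)
    (hPA : P * A = A * P)
    (F H : Matrix (Fin m) (Fin m) ℝ)
    (z : ℝ → Fin N → (Fin m → ℝ))
    (hz : ∀ (i : Fin N) (t : ℝ), HasDerivAt (fun s => z s i)
      (F.mulVec (z t i) + ∑ j, A i j • H.mulVec (z t j)) t)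
    (y : ℝ → Fin N → (Fin m → ℝ))
    (hy : ∀ t i, y t i = z t (π⁻¹ i)) :
    ∀ (i : Fin N) (t : ℝ), HasDerivAt (fun s => y s i)
      (F.mulVec (y t i) + ∑ j, A i j • H.mulVec (y t j)) t := by
  have hA : ∀ i j, A (π⁻¹ i) j = A i (π j) := by
    intro i j
    have h1 : (P * A) i j = A (π⁻¹ i) j := by
      simp only [Matrix.mul_apply, hP]
      rw [Finset.sum_eq_single (π⁻¹ i)]
      · simp
      · intro k _ hk
        rw [if_neg, zero_mul]
        intro h; exact hk (by rw [h]; simp)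
      · simp
    have h2 : (A * P) i j = A i (π j) := by
      simp only [Matrix.mul_apply, hP]
      rw [Finset.sum_eq_single (π j)]
      · simp
      · intro k _ hk; rw [if_neg hk, mul_zero]
      · simp
    rw [← h1, hPA, h2]
  intro i t
  have key : ∑ j, A i j • H.mulVec (y t j) = ∑ j, A (π⁻¹ i) j • H.mulVec (z t j) := by
    rw [← Equiv.sum_comp π (fun j => A i j • H.mulVec (y t j))]
    refine Finset.sum_congr rfl fun j _ => ?_
    rw [hy, hA]; simp
  have := hz (π⁻¹ i) t
  have heq : (fun s => y s i) = fun s => z s (π⁻¹ i) := funext fun s => hy s i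
  rw [heq, hy, key]
  exact hz (π⁻¹ i) t
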